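/- Let G be a minimal candidate, i.e., a graph with a bipartition (A,B), |A| ≥ |B| > 0, every vertex of A of degree at least six, no K_6 minor, and with |V(G)|+|E(G)| minimum among all such graphs. Then |A| = |B| and every vertex in A has degree exactly six. -/

import Mathlib

open SimpleGraph Function

/-- `G` has a `K_t` minor: there are `t` nonempty, pairwise disjoint "branch sets",
each inducing a connected subgraph, with an edge of `G` between any two of them.
(This is the "`t`-cluster" formulation, equivalent to `K_t` being obtainable from a
subgraph of `G` by contracting edges.) -/
def HasCliqueMinor {V : Type*} (G : SimpleGraph V) (t : ℕ) : Prop :=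
  ∃ f : Fin t → Set V,
    (∀ i, (f i).Nonempty) ∧
    (∀ i, (G.induce (f i)).Connected) ∧
    (Pairwise fun i j => Disjoint (f i) (f j)) ∧
    ∀ i j, i ≠ j → ∃ u ∈ f i, ∃ v ∈ f j, G.Adj u v

/-- `(A, B)` is a bipartition of `G`: the parts partition the vertex set and
every edge joins `A` to `B`. -/
def IsBipartitionWith {V : Type*} (G : SimpleGraph V) (A B : Set V) : Prop :=
  (∀ v, v ∈ A ∨ v ∈ B) ∧ (∀ v, ¬(v ∈ A ∧ v ∈ B)) ∧
    ∀ ⦃u v⦄, G.Adj u v → (u ∈ A ↔ v ∈ B)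

/-- A candidate: a graph with a bipartition `(A,B)`, `|A| ≥ |B| > 0`, every vertex
of `A` of degree at least six, and no `K_6` minor. -/
def IsCandidate {V : Type*} (G : SimpleGraph V) (A B : Set V) : Prop :=
  IsBipartitionWith G A B ∧ B.ncard ≤ A.ncard ∧ B.Nonempty ∧
    (∀ a ∈ A, 6 ≤ (G.neighborSet a).ncard) ∧ ¬ HasCliqueMinor G 6

/-- A minimal candidate: a candidate minimizing `|V(G)| + |E(G)|` among all
(finite) candidates. -/
def IsMinimalCandidate {V : Type*} [Fintype V] (G : SimpleGraph V) (A B : Set V) : Prop :=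
  IsCandidate G A B ∧
    ∀ (n : ℕ) (G' : SimpleGraph (Fin n)) (A' B' : Set (Fin n)),
      IsCandidate G' A' B' →
        Fintype.card V + G.edgeSet.ncard ≤ n + G'.edgeSet.ncard

lemma hasCliqueMinor_mono {V : Type*} {G G' : SimpleGraph V} (h : G ≤ G') {t : ℕ}
    (hm : HasCliqueMinor G t) : HasCliqueMinor G' t := by
  obtain ⟨f, h1, h2, h3, h4⟩ := hm
  refine ⟨f, h1, fun i => (h2 i).mono (fun x y hxy => h hxy), h3, fun i j hij => ?_⟩
  obtain ⟨u, hu, v, hv, huv⟩ := h4 i j hij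
  exact ⟨u, hu, v, hv, h huv⟩

/-- Iso between an induced subgraph and the induced subgraph on the image
of an embedding. -/
noncomputable def induceImageIso {V W : Type*} {G : SimpleGraph V} {G' : SimpleGraph W}
    (f : G ↪g G') (s : Set V) : G.induce s ≃g G'.induce (f '' s) where
  toEquiv := Equiv.Set.image f s f.injective
  map_rel_iff' := by
    intro a b
    simp only [Equiv.Set.image, Equiv.Set.imageOfInjOn, Equiv.coe_fn_mk, comap_adj,
      Function.Embedding.coe_subtype]
    exact f.map_adj_iff

lemma hasCliqueMinor_of_embedding {V W : Type*} {G : SimpleGraph V} {G' : SimpleGraph W}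
    (f : G ↪g G') {t : ℕ} (hm : HasCliqueMinor G t) : HasCliqueMinor G' t := by
  obtain ⟨s, h1, h2, h3, h4⟩ := hm
  refine ⟨fun i => f '' s i, fun i => (h1 i).image f, fun i => ?_,
    fun i j hij => (Set.disjoint_image_iff f.injective).mpr (h3 hij), fun i j hij => ?_⟩
  · exact (induceImageIso f (s i)).connected_iff.mp (h2 i)
  · obtain ⟨u, hu, v, hv, huv⟩ := h4 i j hij
    exact ⟨f u, Set.mem_image_of_mem f hu, f v, Set.mem_image_of_mem f hv, f.toHom.map_adj huv⟩

lemma IsCandidate.of_iso {V W : Type*} {G : SimpleGraph V} {G₂ : SimpleGraph W}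
    (φ : G ≃g G₂) {A B : Set V} (h : IsCandidate G A B) :
    IsCandidate G₂ (⇑φ '' A) (⇑φ '' B) := by
  obtain ⟨⟨hb1, hb2, hb3⟩, hBA, hBne, hdeg, hmin⟩ := h
  have hinj : Function.Injective ⇑φ := φ.toEquiv.injective
  have hmem : ∀ (s : Set V) (w : W), w ∈ ⇑φ '' s ↔ φ.symm w ∈ s := by
    intro s w
    constructor
    · rintro ⟨x, hx, rfl⟩; simpa using hx
    · intro hx; exact ⟨φ.symm w, hx, by simp⟩
  refine ⟨⟨?_, ?_, ?_⟩, ?_, hBne.image _, ?_, ?_⟩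
  · intro w; rw [hmem, hmem]; exact hb1 _
  · intro w; rw [hmem, hmem]; exact hb2 _
  · intro u v huv
    rw [hmem, hmem]
    exact hb3 (φ.symm.map_adj_iff.mpr huv)
  · rw [Set.ncard_image_of_injective _ hinj, Set.ncard_image_of_injective _ hinj]
    exact hBA
  · intro w hw
    rw [hmem] at hw
    have key : G₂.neighborSet w = ⇑φ '' G.neighborSet (φ.symm w) := by
      ext x
      rw [hmem]
      exact φ.symm.map_adj_iff.symm
    rw [key, Set.ncard_image_of_injective _ hinj]
    exact hdeg _ hw
  · intro hm
    exact hmin (hasCliqueMinor_of_embedding φ.symm.toEmbedding hm)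

lemma edgeSet_ncard_of_iso {V W : Type*} {G : SimpleGraph V} {G₂ : SimpleGraph W}
    (φ : G ≃g G₂) : G.edgeSet.ncard = G₂.edgeSet.ncard := by
  rw [← Nat.card_coe_set_eq, ← Nat.card_coe_set_eq]
  exact Nat.card_congr φ.mapEdgeSet

/-- In a minimal candidate, `|A| = |B|` and every vertex of `A` has degree exactly six. -/
theorem minimalCandidate_card_and_degree {V : Type} [Fintype V] (G : SimpleGraph V)
    (A B : Set V) (hmin : IsMinimalCandidate G A B) :
    A.ncard = B.ncard ∧ ∀ a ∈ A, (G.neighborSet a).ncard = 6 := by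
  classical
  obtain ⟨⟨⟨hb1, hb2, hb3⟩, hBA, hBne, hdeg, hKm⟩, hminim⟩ := hmin
  set n := Fintype.card V with hn
  have e : V ≃ Fin n := Fintype.equivFin V
  constructor
  · -- |A| = |B|
    by_contra hne
    have hlt : B.ncard < A.ncard := lt_of_le_of_ne hBA (fun h => hne h.symm)
    obtain ⟨a, ha⟩ : A.Nonempty := Set.nonempty_of_ncard_ne_zero (by omega)
    obtain ⟨b, hbB⟩ := hBne
    have haB : a ∉ B := fun h => hb2 a ⟨ha, h⟩
    set s : Set V := {a}ᶜ with hs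
    set G₁ := G.induce s with hG₁
    have hpre : ∀ T : Set V, (Subtype.val ⁻¹' T : Set ↥s).ncard = (T \ {a}).ncard := by
      intro T
      rw [← Set.ncard_image_of_injective _ Subtype.val_injective,
        Subtype.image_preimage_coe]
      congr 1
      rw [hs]
      ext x
      simp [Set.mem_diff, and_comm]
    have hcand : IsCandidate G₁ (Subtype.val ⁻¹' A) (Subtype.val ⁻¹' B) := by
      refine ⟨⟨fun v => hb1 v.val, fun v => hb2 v.val,
        fun u v huv => hb3 huv⟩, ?_, ?_, ?_, ?_⟩
      · rw [hpre, hpre]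
        have hA : (A \ {a}).ncard = A.ncard - 1 :=
          Set.ncard_diff_singleton_of_mem ha
        have hB : (B \ {a}).ncard = B.ncard := by
          congr 1
          rw [Set.diff_singleton_eq_self haB]
        omega
      · have hbs : b ∈ s := by
          rw [hs]
          simp only [Set.mem_compl_iff, Set.mem_singleton_iff]
          rintro rfl
          exact haB hbB
        exact ⟨⟨b, hbs⟩, hbB⟩
      · intro x hx
        have hxA : (x : V) ∈ A := hx
        have hna : a ∉ G.neighborSet (x : V) := by
          intro hadj
          exact hb2 a ⟨ha, (hb3 hadj).mp hxA⟩
        have key : Subtype.val '' (G₁.neighborSet x) = G.neighborSet (x : V) := by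
          ext y
          constructor
          · rintro ⟨z, hz, rfl⟩; exact hz
          · intro hy
            have hys : y ∈ s := by
              rw [hs]
              simp only [Set.mem_compl_iff, Set.mem_singleton_iff]
              rintro rfl
              exact hna hy
            exact ⟨⟨y, hys⟩, hy, rfl⟩
        rw [← Set.ncard_image_of_injective _ Subtype.val_injective, key]
        exact hdeg _ hxA
      · intro hm
        exact hKm (hasCliqueMinor_of_embedding (SimpleGraph.Embedding.induce s) hm)
    -- transfer to Fin m
    set m := Fintype.card ↥s with hmdef
    have e' : ↥s ≃ Fin m := Fintype.equivFin ↥s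
    have φ := (SimpleGraph.Iso.comap e'.symm G₁).symm
    have hcand2 := hcand.of_iso φ
    have hle := hminim m _ _ _ hcand2
    rw [← edgeSet_ncard_of_iso φ] at hle
    have hEle : G₁.edgeSet.ncard ≤ G.edgeSet.ncard := by
      rw [← Nat.card_coe_set_eq, ← Nat.card_coe_set_eq]
      exact Nat.card_le_card_of_injective _
        (SimpleGraph.Embedding.mapEdgeSet (SimpleGraph.Embedding.induce s)).injective
    have hmn : m = n - 1 := by
      have h1 : ({a} : Set V).ncard + ({a}ᶜ : Set V).ncard = n := by
        rw [hn, ← Nat.card_eq_fintype_card]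
        exact Set.ncard_add_ncard_compl _ (Set.toFinite _) (Set.toFinite _)
      have h2 : m = ({a}ᶜ : Set V).ncard := by
        rw [hmdef, ← Nat.card_eq_fintype_card, Nat.card_coe_set_eq, hs]
      rw [Set.ncard_singleton] at h1
      omega
    have hnpos : 1 ≤ n := by
      rw [hn]
      exact Fintype.card_pos_iff.mpr ⟨a⟩
    omega
  · -- degrees
    intro a ha
    by_contra hne
    have h7 : 7 ≤ (G.neighborSet a).ncard := lt_of_le_of_ne (hdeg a ha) (Ne.symm hne)
    obtain ⟨b, hb⟩ : (G.neighborSet a).Nonempty := Set.nonempty_of_ncard_ne_zero (by omega)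
    have hab : G.Adj a b := hb
    have hbB : b ∈ B := (hb3 hab).mp ha
    have hanb : a ≠ b := fun h => hb2 a ⟨ha, h ▸ hbB⟩
    set G₁ := G.deleteEdges {s(a, b)} with hG₁
    have hcand : IsCandidate G₁ A B := by
      refine ⟨⟨hb1, hb2, fun u v huv =>
        hb3 ((SimpleGraph.deleteEdges_adj.mp huv).1)⟩, hBA, hBne, ?_, ?_⟩
      · intro a' ha'
        by_cases hcase : a' = a
        · subst hcase
          have key : G₁.neighborSet a' = G.neighborSet a' \ {b} := by
            ext x
            constructor
            · intro hx
              have h := SimpleGraph.deleteEdges_adj.mp hx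
              refine ⟨h.1, fun hxb => ?_⟩
              rw [Set.mem_singleton_iff] at hxb
              exact h.2 (by rw [Set.mem_singleton_iff, hxb])
            · rintro ⟨hadj, hxb⟩
              refine SimpleGraph.deleteEdges_adj.mpr ⟨hadj, fun hmem => ?_⟩
              rw [Set.mem_singleton_iff] at hmem
              rcases Sym2.eq_iff.mp hmem with ⟨_, h2⟩ | ⟨h1, _⟩
              · exact hxb (Set.mem_singleton_iff.mpr h2)
              · exact hanb h1
          rw [key, Set.ncard_diff_singleton_of_mem hb]
          omega
        · have ha'b : a' ≠ b := fun h => hb2 a' ⟨ha', h ▸ hbB⟩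
          have key : G₁.neighborSet a' = G.neighborSet a' := by
            ext x
            constructor
            · exact fun h => (SimpleGraph.deleteEdges_adj.mp h).1
            · intro hadj
              refine SimpleGraph.deleteEdges_adj.mpr ⟨hadj, fun hmem => ?_⟩
              rw [Set.mem_singleton_iff] at hmem
              rcases Sym2.eq_iff.mp hmem with ⟨h1, _⟩ | ⟨h1, _⟩
              · exact hcase h1
              · exact ha'b h1
          rw [key]
          exact hdeg a' ha'
      · intro hm
        exact hKm (hasCliqueMinor_mono (SimpleGraph.deleteEdges_le _) hm)
    have φ := (SimpleGraph.Iso.comap e.symm G₁).symm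
    have hcand2 := hcand.of_iso φ
    have hle := hminim n _ _ _ hcand2
    rw [← edgeSet_ncard_of_iso φ] at hle
    have hEmem : s(a, b) ∈ G.edgeSet := hab
    have hE : G₁.edgeSet.ncard = G.edgeSet.ncard - 1 := by
      rw [hG₁, edgeSet_deleteEdges,
        Set.ncard_diff_singleton_of_mem hEmem]
    have hpos : 1 ≤ G.edgeSet.ncard := by
      have := Set.ncard_pos (Set.toFinite G.edgeSet) |>.mpr ⟨_, hEmem⟩
      omega
    omega
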